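/- arXiv:2504.18394 — 2 statements merged into one kernel-verified Lean document; each statement's English description precedes it below -/
import Mathlib

section
/- Greedy submodular maximization with multiplicatively approximate oracle: let f be a monotone nonnegative submodular function on subsets of [d] with f(∅)=0, and suppose the greedy algorithm for k rounds selects at each round an element whose evaluated marginal gain (according to an oracle returning values in [(1−γ)f(S), (1+γ)f(S)] for each queried set S) is maximal. If γ = ε/(4k) with ε ∈ (0,1), then the resulting set G of size k satisfies f(G) ≥ (1 − 1/e − ε) · max_{|S|=k} f(S). -/
lemma marg_sum_aux {d : ℕ} (f : Finset (Fin d) → ℝ)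
    (hsub : ∀ S T : Finset (Fin d), ∀ e : Fin d, S ⊆ T → e ∉ T →
      f (insert e T) - f T ≤ f (insert e S) - f S)
    (B : Finset (Fin d)) :
    ∀ A : Finset (Fin d), (∀ x ∈ A, x ∉ B) →
      f (A ∪ B) - f B ≤ ∑ x ∈ A, (f (insert x B) - f B) := by
  intro A
  induction A using Finset.induction_on with
  | empty => intro _; simp
  | @insert a A ha ih =>
    intro h
    have haB : a ∉ B := h a (Finset.mem_insert_self a A)
    have haAB : a ∉ A ∪ B := by simp [ha, haB]
    have h1 : f (insert a (A ∪ B)) - f (A ∪ B) ≤ f (insert a B) - f B :=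
      hsub B (A ∪ B) a Finset.subset_union_right haAB
    have h2 := ih (fun x hx => h x (Finset.mem_insert_of_mem hx))
    rw [Finset.sum_insert ha, Finset.insert_union]
    linarith

set_option maxHeartbeats 1000000 in
/-- Greedy submodular maximization with a multiplicatively `(1 ± γ)`-approximate oracle `g`,
with `γ = ε/(4k)`, yields a `(1 − 1/e − ε)`-approximation. -/
theorem stmt9 (d k : ℕ) (hk : 1 ≤ k) (ε γ : ℝ) (hε : ε ∈ Set.Ioo (0 : ℝ) 1)
    (hγ : γ = ε / (4 * k))
    (f g : Finset (Fin d) → ℝ)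
    (hf0 : f ∅ = 0) (hfnn : ∀ S, 0 ≤ f S)
    (hmono : ∀ S T, S ⊆ T → f S ≤ f T)
    (hsub : ∀ S T : Finset (Fin d), ∀ e : Fin d, S ⊆ T → e ∉ T →
      f (insert e T) - f T ≤ f (insert e S) - f S)
    (hg : ∀ S, (1 - γ) * f S ≤ g S ∧ g S ≤ (1 + γ) * f S)
    (G : ℕ → Finset (Fin d)) (hG0 : G 0 = ∅)
    (hstep : ∀ i < k, ∃ e, e ∉ G i ∧ G (i + 1) = insert e (G i) ∧
      ∀ e', g (insert e' (G i)) - g (G i) ≤ g (insert e (G i)) - g (G i)) :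
    ∀ S : Finset (Fin d), S.card = k →
      (1 - 1 / Real.exp 1 - ε) * f S ≤ f (G k) := by
  intro S hS
  obtain ⟨hε0, hε1⟩ := hε
  have hkR : (1 : ℝ) ≤ (k : ℝ) := by exact_mod_cast hk
  have hkpos : (0:ℝ) < k := by linarith
  have hγ0 : 0 ≤ γ := by
    rw [hγ]; positivity
  have hγ4 : γ ≤ 1/4 := by
    rw [hγ, div_le_iff₀ (by positivity)]
    nlinarith
  have h1γ : (0:ℝ) < 1 + γ := by linarith
  -- exponential bound ingredient
  have hexpinv : 1 / Real.exp 1 = Real.exp (-1) := by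
    rw [Real.exp_neg]; rw [one_div]
  -- chain of subsets
  have hchain : ∀ i j : ℕ, i ≤ j → j ≤ k → G i ⊆ G j := by
    intro i j hij hjk
    induction j with
    | zero => simpa [Nat.le_zero.mp hij] using Finset.Subset.refl _
    | succ n ih =>
      rcases Nat.lt_or_ge i (n+1) with h | h
      · have hik : i ≤ n := Nat.lt_succ_iff.mp h
        have hnk : n ≤ k := le_trans (Nat.le_succ n) hjk
        obtain ⟨e, -, hGe, -⟩ := hstep n (Nat.lt_of_lt_of_le (Nat.lt_succ_self n) hjk)
        exact (ih hik (le_trans (Nat.le_succ n) hjk)).trans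
          (by rw [hGe]; exact Finset.subset_insert _ _)
      · have : i = n + 1 := le_antisymm hij h
        subst this; exact Finset.Subset.refl _
  by_cases hP : ∃ i ≤ k, f S ≤ f (G i)
  · obtain ⟨i, hik, hfi⟩ := hP
    have h1 : f (G i) ≤ f (G k) := hmono _ _ (hchain i k hik le_rfl)
    have he : 0 < Real.exp 1 := Real.exp_pos 1
    have : 0 < 1 / Real.exp 1 := by positivity
    nlinarith [hfnn S]
  · push_neg at hP
    obtain ⟨c, hc⟩ : ∃ c : ℝ, c = (1 - γ) / (1 + γ) := ⟨_, rfl⟩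
    have hc1 : c ≤ 1 := by
      rw [hc, div_le_one h1γ]; linarith
    have hc0 : 0 ≤ c := by
      rw [hc]; apply div_nonneg <;> linarith
    have hc2 : 1 - 2*γ ≤ c := by
      rw [hc, le_div_iff₀ h1γ]; nlinarith
    obtain ⟨r, hr⟩ : ∃ r : ℝ, r = 1 - c / (k:ℝ) := ⟨_, rfl⟩
    have hr0 : 0 ≤ r := by
      rw [hr]; have : c / k ≤ 1 := by
        rw [div_le_one hkpos]; linarith
      linarith
    have hr1 : r ≤ 1 := by
      rw [hr]; have : 0 ≤ c / k := div_nonneg hc0 (le_of_lt hkpos)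
      linarith
    -- per-step inequality
    have hstep' : ∀ i < k, f S - f (G (i+1)) ≤ r * (f S - f (G i)) + 2*γ*f S := by
      intro i hik
      obtain ⟨e, he, hGe, hmax⟩ := hstep i hik
      have hfGi : f (G i) < f S := hP i (le_of_lt hik)
      set A : Finset (Fin d) := S \ G i with hA
      have hAn : ∀ x ∈ A, x ∉ G i := fun x hx => (Finset.mem_sdiff.mp hx).2
      have hsum := marg_sum_aux f hsub (G i) A hAn
      have hSsub : S ⊆ A ∪ G i := by
        intro x hx
        by_cases h : x ∈ G i
        · exact Finset.mem_union_right _ h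
        · exact Finset.mem_union_left _ (Finset.mem_sdiff.mpr ⟨hx, h⟩)
      have hfS : f S ≤ f (A ∪ G i) := hmono _ _ hSsub
      have hAne : A.Nonempty := by
        rcases Finset.eq_empty_or_nonempty A with h | h
        · exfalso
          have hsubGi : S ⊆ G i := Finset.sdiff_eq_empty_iff_subset.mp h
          exact absurd (hmono _ _ hsubGi) (not_le.mpr hfGi)
        · exact h
      obtain ⟨e', he'A, hmax'⟩ :=
        A.exists_max_image (fun x => f (insert x (G i)) - f (G i)) hAne
      have hsum2 : ∑ x ∈ A, (f (insert x (G i)) - f (G i))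
          ≤ A.card * (f (insert e' (G i)) - f (G i)) := by
        calc ∑ x ∈ A, (f (insert x (G i)) - f (G i))
            ≤ ∑ _x ∈ A, (f (insert e' (G i)) - f (G i)) :=
              Finset.sum_le_sum (fun x hx => hmax' x hx)
          _ = A.card * (f (insert e' (G i)) - f (G i)) := by
              rw [Finset.sum_const, nsmul_eq_mul]
      have hm0 : 0 ≤ f (insert e' (G i)) - f (G i) := by
        have := hmono (G i) (insert e' (G i)) (Finset.subset_insert _ _)
        linarith
      have hcard : (A.card : ℝ) ≤ k := by
        have : A.card ≤ S.card := Finset.card_le_card (Finset.sdiff_subset)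
        rw [hS] at this
        exact_mod_cast this
      have hkey : f S - f (G i) ≤ (k:ℝ) * (f (insert e' (G i)) - f (G i)) := by
        have h1 : (A.card : ℝ) * (f (insert e' (G i)) - f (G i))
            ≤ (k:ℝ) * (f (insert e' (G i)) - f (G i)) :=
          mul_le_mul_of_nonneg_right hcard hm0
        linarith
      -- oracle chain
      have hg1 := (hg (insert e' (G i))).1
      have hg2 := (hg (G (i+1))).2
      have hgle : g (insert e' (G i)) ≤ g (G (i+1)) := by
        have := hmax e'
        rw [hGe]; linarith [hmax e']
      have horacle : (1 - γ) * f (insert e' (G i)) ≤ (1 + γ) * f (G (i+1)) := by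
        linarith
      -- combine
      have hfins : f (G i) + (f S - f (G i)) / k ≤ f (insert e' (G i)) := by
        have hdv : (f S - f (G i)) / k ≤ f (insert e' (G i)) - f (G i) := by
          rw [div_le_iff₀ hkpos]
          nlinarith
        linarith
      have hG1 : c * (f (G i) + (f S - f (G i)) / k) ≤ f (G (i+1)) := by
        have h2 : c * f (insert e' (G i)) ≤ f (G (i+1)) := by
          rw [hc, div_mul_eq_mul_div, div_le_iff₀ h1γ]
          nlinarith
        calc c * (f (G i) + (f S - f (G i)) / k) ≤ c * f (insert e' (G i)) :=
              mul_le_mul_of_nonneg_left hfins hc0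
          _ ≤ f (G (i+1)) := h2
      have h1c : 1 - c ≤ 2*γ := by linarith
      have hfGi' : 0 ≤ f (G i) := hfnn _
      -- f S - f(G(i+1)) ≤ f S - c f(Gi) - c (fS - fGi)/k = r(fS - fGi) + (1-c) fGi
      have expand : f S - c * (f (G i) + (f S - f (G i)) / k)
          = r * (f S - f (G i)) + (1 - c) * f (G i) := by
        rw [hr]; field_simp; ring
      have hb1 : f S - f (G (i+1)) ≤ r * (f S - f (G i)) + (1 - c) * f (G i) := by
        linarith
      have hb2 : (1 - c) * f (G i) ≤ 2*γ * f (G i) :=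
        mul_le_mul_of_nonneg_right h1c hfGi'
      have hb3 : 2*γ * f (G i) ≤ 2*γ * f S :=
        mul_le_mul_of_nonneg_left (le_of_lt hfGi) (by linarith)
      linarith
    -- induction bound
    have hbound : ∀ i ≤ k, f S - f (G i) ≤ r^i * f S + 2*γ*i*f S := by
      intro i
      induction i with
      | zero => intro _; simp [hG0, hf0]
      | succ n ih =>
        intro hn
        have hnk : n < k := Nat.lt_of_succ_le hn
        have h1 := hstep' n hnk
        have h2 := ih (le_of_lt hnk)
        have hfS0 := hfnn S
        have hrn : 0 ≤ r^n := pow_nonneg hr0 n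
        have h3 : r * (f S - f (G n)) ≤ r * (r^n * f S + 2*γ*(n:ℝ)*f S) :=
          mul_le_mul_of_nonneg_left h2 hr0
        have hnn : 0 ≤ 2*γ*(n:ℝ)*f S :=
          mul_nonneg (mul_nonneg (by linarith) (Nat.cast_nonneg n)) hfS0
        have h4 : r * (2*γ*(n:ℝ)*f S) ≤ 2*γ*(n:ℝ)*f S := by
          calc r * (2*γ*(n:ℝ)*f S) ≤ 1 * (2*γ*(n:ℝ)*f S) :=
                mul_le_mul_of_nonneg_right hr1 hnn
            _ = 2*γ*(n:ℝ)*f S := one_mul _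
        have h5 : r * (r^n * f S + 2*γ*(n:ℝ)*f S)
            = r^(n+1) * f S + r * (2*γ*(n:ℝ)*f S) := by ring
        have h6 : (((n+1 : ℕ)) : ℝ) = (n:ℝ) + 1 := by push_cast; ring
        rw [h6]
        have h7 : 2*γ*((n:ℝ)+1)*f S = 2*γ*(n:ℝ)*f S + 2*γ*f S := by ring
        linarith
    have hfinal := hbound k le_rfl
    -- numeric: r^k ≤ exp(-c) ≤ exp(-1) + 2γ,  2γk = ε/2
    have hrk : r^k ≤ Real.exp (-c) := by
      have h1 : r ≤ Real.exp (-(c/k)) := by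
        rw [hr]
        have := Real.add_one_le_exp (-(c/k))
        linarith
      calc r^k ≤ (Real.exp (-(c/k)))^k := pow_le_pow_left₀ hr0 h1 k
        _ = Real.exp (k * -(c/k)) := (Real.exp_nat_mul _ k).symm
        _ = Real.exp (-c) := by
            congr 1
            field_simp
    have hec : Real.exp (-c) ≤ Real.exp (-1) + 2*γ := by
      have h1 : Real.exp (-c) ≤ Real.exp (2*γ - 1) :=
        Real.exp_le_exp.mpr (by linarith)
      have h2 : 1 - 2*γ ≤ Real.exp (-(2*γ)) := by
        have := Real.add_one_le_exp (-(2*γ)); linarith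
      -- exp(2γ-1) - exp(-1) = exp(-1)(exp(2γ)-1) ≤ 2γ exp(2γ-1) ≤ 2γ
      have h3 : Real.exp (2*γ - 1) * (1 - 2*γ) ≤ Real.exp (-1) := by
        calc Real.exp (2*γ - 1) * (1 - 2*γ)
            ≤ Real.exp (2*γ - 1) * Real.exp (-(2*γ)) :=
              mul_le_mul_of_nonneg_left h2 (le_of_lt (Real.exp_pos _))
          _ = Real.exp (-1) := by rw [← Real.exp_add]; ring_nf
      have h4 : Real.exp (2*γ - 1) ≤ Real.exp 0 := Real.exp_le_exp.mpr (by linarith)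
      rw [Real.exp_zero] at h4
      nlinarith [Real.exp_pos (2*γ - 1)]
    have h2γk : 2*γ*(k:ℝ) = ε/2 := by
      rw [hγ]; field_simp; ring
    have hfS0 := hfnn S
    have hrkfs : r^k * f S ≤ (Real.exp (-1) + 2*γ) * f S :=
      mul_le_mul_of_nonneg_right (le_trans hrk hec) hfS0
    have h2γε : 2*γ ≤ ε/2 := by
      nlinarith [h2γk]
    rw [hexpinv]
    nlinarith [mul_le_mul_of_nonneg_right h2γε hfS0]
end

section
/- Bound on nonzero entries among small items: let S_1, …, S_d be subsets of a universe with max coverage optimum OPT for parameter k. If every item in a set M (the 'small' items) lies in fewer than d/k of the subsets, then the total number of (item, subset) incidences among items of M is at most 2 · (d/k) · OPT. -/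
/-- Bound on incidences among small items: if every choice of `k` subsets covers at most
`OPT` items and every item of `M` lies in fewer than `d/k` of the `d` subsets, then the
total number of (item, subset) incidences among items of `M` is at most `2·(d/k)·OPT`. -/
theorem stmt12 (U : Type*) [Fintype U] [DecidableEq U] (d k OPT : ℕ)
    (hk : 1 ≤ k) (hkd : k ≤ d) (S : Fin d → Finset U)
    (hOPT : ∀ C : Finset (Fin d), C.card = k → (C.biUnion S).card ≤ OPT)
    (M : Finset U)
    (hM : ∀ i ∈ M, (k * (Finset.univ.filter fun j : Fin d => i ∈ S j).card : ℝ) < d) :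
    ((∑ i ∈ M, (Finset.univ.filter fun j : Fin d => i ∈ S j).card : ℕ) : ℝ)
      ≤ 2 * ((d : ℝ) / k) * OPT := by
  classical
  set deg : U → ℕ := fun i => (Finset.univ.filter fun j : Fin d => i ∈ S j).card with hdeg_def
  have hdeg : ∀ i ∈ M, k * deg i ≤ d := by
    intro i hi
    have h := (hM i hi).le
    exact_mod_cast h
  have hswap : ∀ A : Finset U,
      (∑ i ∈ A, deg i) = ∑ j : Fin d, (A.filter fun i => i ∈ S j).card := by
    intro A
    simp only [hdeg_def, Finset.card_filter]
    rw [Finset.sum_comm]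
  have main : ∀ t, t ≤ k → ∃ D : Finset (Fin d), D.card = t ∧
      t * (∑ i ∈ M \ D.biUnion S, deg i) ≤ d * (M ∩ D.biUnion S).card := by
    intro t
    induction t with
    | zero => intro _; exact ⟨∅, by simp⟩
    | succ t ih =>
      intro ht
      obtain ⟨D, hDcard, hD⟩ := ih (Nat.le_of_succ_le ht)
      set A := M \ D.biUnion S with hA
      have hne : (Finset.univ : Finset (Fin d)).Nonempty :=
        ⟨⟨0, lt_of_lt_of_le hk hkd⟩, Finset.mem_univ _⟩
      obtain ⟨j0, -, hj0⟩ := Finset.exists_max_image Finset.univ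
        (fun j => (A.filter fun i => i ∈ S j).card) hne
      have hmax : (∑ i ∈ A, deg i) ≤ d * (A.filter fun i => i ∈ S j0).card := by
        rw [hswap A]
        calc ∑ j : Fin d, (A.filter fun i => i ∈ S j).card
            ≤ ∑ _j : Fin d, (A.filter fun i => i ∈ S j0).card :=
              Finset.sum_le_sum fun j _ => hj0 j (Finset.mem_univ j)
          _ = d * (A.filter fun i => i ∈ S j0).card := by
              simp [Finset.sum_const, Finset.card_univ]
      have hexj : ∃ j ∉ D, (∑ i ∈ A, deg i) ≤ d * (A.filter fun i => i ∈ S j).card := by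
        by_cases hj0D : j0 ∈ D
        · have hz : (A.filter fun i => i ∈ S j0).card = 0 := by
            rw [Finset.card_eq_zero, Finset.filter_eq_empty_iff]
            intro i hiA hiS
            exact (Finset.mem_sdiff.mp hiA).2 (Finset.mem_biUnion.mpr ⟨j0, hj0D, hiS⟩)
          have hrem0 : (∑ i ∈ A, deg i) = 0 := by
            have := hmax; rw [hz] at this; omega
          have hne' : D ≠ Finset.univ := by
            intro h
            rw [h, Finset.card_univ, Fintype.card_fin] at hDcard; omega
          obtain ⟨j, -, hj⟩ := Finset.exists_of_ssubset
            ((Finset.ssubset_iff_subset_ne).mpr ⟨Finset.subset_univ D, hne'⟩)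
          exact ⟨j, hj, by rw [hrem0]; exact Nat.zero_le _⟩
        · exact ⟨j0, hj0D, hmax⟩
      obtain ⟨j, hjD, hj⟩ := hexj
      refine ⟨insert j D, by rw [Finset.card_insert_of_notMem hjD, hDcard], ?_⟩
      have hsub : M \ (insert j D).biUnion S ⊆ A := by
        intro i hi
        rw [Finset.mem_sdiff] at hi ⊢
        refine ⟨hi.1, fun h => hi.2 ?_⟩
        rw [Finset.biUnion_insert]
        exact Finset.mem_union_right _ h
      have hdisj : Disjoint (M ∩ D.biUnion S) (A.filter fun i => i ∈ S j) := by
        refine Finset.disjoint_left.mpr fun i hi1 hi2 => ?_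
        exact (Finset.mem_sdiff.mp (Finset.mem_filter.mp hi2).1).2 (Finset.mem_inter.mp hi1).2
      have hsubu : (M ∩ D.biUnion S) ∪ (A.filter fun i => i ∈ S j)
          ⊆ M ∩ (insert j D).biUnion S := by
        intro i hi
        rw [Finset.mem_inter, Finset.biUnion_insert, Finset.mem_union]
        rcases Finset.mem_union.mp hi with h | h
        · obtain ⟨h1, h2⟩ := Finset.mem_inter.mp h
          exact ⟨h1, Or.inr h2⟩
        · obtain ⟨h1, h2⟩ := Finset.mem_filter.mp h
          exact ⟨(Finset.mem_sdiff.mp h1).1, Or.inl h2⟩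
      have hcov : (M ∩ D.biUnion S).card + (A.filter fun i => i ∈ S j).card
          ≤ (M ∩ (insert j D).biUnion S).card := by
        rw [← Finset.card_union_of_disjoint hdisj]
        exact Finset.card_le_card hsubu
      calc (t + 1) * (∑ i ∈ M \ (insert j D).biUnion S, deg i)
          ≤ (t + 1) * (∑ i ∈ A, deg i) :=
            Nat.mul_le_mul_left _ (Finset.sum_le_sum_of_subset hsub)
        _ = t * (∑ i ∈ A, deg i) + (∑ i ∈ A, deg i) := by ring
        _ ≤ d * (M ∩ D.biUnion S).card + d * (A.filter fun i => i ∈ S j).card :=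
            add_le_add hD hj
        _ = d * ((M ∩ D.biUnion S).card + (A.filter fun i => i ∈ S j).card) := by ring
        _ ≤ d * (M ∩ (insert j D).biUnion S).card := Nat.mul_le_mul_left _ hcov
  obtain ⟨D, hDcard, hD⟩ := main k le_rfl
  have hcovOPT : (M ∩ D.biUnion S).card ≤ OPT :=
    le_trans (Finset.card_le_card Finset.inter_subset_right) (hOPT D hDcard)
  have hsplit : (∑ i ∈ M, deg i)
      = (∑ i ∈ M \ D.biUnion S, deg i) + ∑ i ∈ M ∩ D.biUnion S, deg i := by
    rw [← Finset.sum_union (Finset.disjoint_sdiff_inter M (D.biUnion S)),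
      Finset.sdiff_union_inter]
  have h2 : k * (∑ i ∈ M ∩ D.biUnion S, deg i) ≤ d * (M ∩ D.biUnion S).card := by
    rw [Finset.mul_sum]
    calc ∑ i ∈ M ∩ D.biUnion S, k * deg i
        ≤ ∑ _i ∈ M ∩ D.biUnion S, d :=
          Finset.sum_le_sum fun i hi => hdeg i (Finset.mem_inter.mp hi).1
      _ = d * (M ∩ D.biUnion S).card := by
          rw [Finset.sum_const, smul_eq_mul, mul_comm]
  have key : k * (∑ i ∈ M, deg i) ≤ 2 * d * OPT := by
    calc k * (∑ i ∈ M, deg i)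
        = k * (∑ i ∈ M \ D.biUnion S, deg i) + k * (∑ i ∈ M ∩ D.biUnion S, deg i) := by
          rw [hsplit, mul_add]
      _ ≤ d * (M ∩ D.biUnion S).card + d * (M ∩ D.biUnion S).card := add_le_add hD h2
      _ = 2 * (d * (M ∩ D.biUnion S).card) := by ring
      _ ≤ 2 * (d * OPT) := Nat.mul_le_mul_left _ (Nat.mul_le_mul_left _ hcovOPT)
      _ = 2 * d * OPT := by ring
  have hk' : (0 : ℝ) < k := by exact_mod_cast hk
  have hrhs : (2 : ℝ) * ((d : ℝ) / k) * OPT = (2 * d * OPT) / k := by ring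
  rw [hrhs, le_div_iff₀ hk']
  have : ((∑ i ∈ M, deg i : ℕ) : ℝ) * k = (k * (∑ i ∈ M, deg i) : ℕ) := by
    push_cast; ring
  rw [this]
  exact_mod_cast key
end
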